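/- In the affine symmetric group of order n, if t₁ = (a,b)_u and t₂ = (c,d)_v are affine transpositions with {a,b} = {c,d} as sets of residue classes modulo n (and t₁ ≠ t₂), then the product t₁t₂ has infinite order. Explicitly, (a,b)_u (a,b)_v = (a)_{[v−u]}(b)_{[u−v]} and (a,b)_u (b,a)_v = (a)_{[−u−v]}(b)_{[u+v]}, which are nontrivial translations. -/
import Mathlib


/- Statement 5: in the affine symmetric group of order n, the product of two distinct
affine transpositions with the same pair of residue classes has infinite order; explicitly
(a,b)_u (a,b)_v = (a)_{[v−u]} (b)_{[u−v]} and (a,b)_u (b,a)_v = (a)_{[−u−v]} (b)_{[u+v]}. -/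

open scoped Classical

noncomputable section

/-- The affine transposition exchanging the residue class of `i` (mod `n`) with that of `j`:
it sends `x ≡ i` to `x + (j - i)` and `x ≡ j` to `x + (i - j)`; the affine transposition
`(i,j)_p` is `affT n i (j + p·n)`. -/
def affT (n : ℕ) (i j : ℤ) : ℤ → ℤ := fun x =>
  if (x : ZMod n) = (i : ZMod n) then x + (j - i)
  else if (x : ZMod n) = (j : ZMod n) then x + (i - j)
  else x

/-- The cycle with shift `m` on the residue class of `a`: the affine permutation
`(a)_{[m]}` sending `a + qn` to `a + (q+m)n` and fixing everything else. -/
def shiftCycle (n : ℕ) (a m : ℤ) : ℤ → ℤ := fun x =>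
  if (x : ZMod n) = (a : ZMod n) then x + m * n else x

lemma cast_add_mul (n : ℕ) (x k : ℤ) : ((x + k * n : ℤ) : ZMod n) = (x : ZMod n) := by
  push_cast; simp

lemma affT_a (n : ℕ) (a b u x : ℤ) (hx : (x : ZMod n) = a) :
    affT n a (b + u * n) x = x + (b + u * n - a) := by
  simp [affT, hx]

lemma affT_b (n : ℕ) (a b u x : ℤ) (hab : (a : ZMod n) ≠ b) (hx : (x : ZMod n) = b) :
    affT n a (b + u * n) x = x + (a - (b + u * n)) := by
  have h1 : (x : ZMod n) ≠ (a : ZMod n) := by rw [hx]; exact fun h => hab h.symm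
  rw [affT]
  rw [if_neg h1, if_pos (by rw [cast_add_mul, hx])]

lemma affT_o (n : ℕ) (a b u x : ℤ) (ha : (x : ZMod n) ≠ a) (hb : (x : ZMod n) ≠ b) :
    affT n a (b + u * n) x = x := by
  rw [affT, if_neg ha, if_neg (by rw [cast_add_mul]; exact hb)]

lemma sc_a (n : ℕ) (a m x : ℤ) (hx : (x : ZMod n) = a) :
    shiftCycle n a m x = x + m * n := by simp [shiftCycle, hx]

lemma sc_o (n : ℕ) (a m x : ℤ) (hx : (x : ZMod n) ≠ a) :
    shiftCycle n a m x = x := by simp [shiftCycle, hx]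

lemma iter_lemma (n : ℕ) (a b s t : ℤ) (hab : (a : ZMod n) ≠ b) :
    ∀ m : ℕ, (shiftCycle n a s ∘ shiftCycle n b t)^[m] a = a + m * s * n := by
  intro m
  induction m with
  | zero => simp
  | succ m ih =>
    rw [Function.iterate_succ_apply', ih, Function.comp_apply]
    have hres : ((a + m * s * n : ℤ) : ZMod n) = (a : ZMod n) := by
      push_cast; simp
    rw [sc_o n b t _ (by rw [hres]; exact hab), sc_a n a s _ hres]
    push_cast; ring

theorem statement5 (n : ℕ) (hn : 0 < n) (a b u v : ℤ)
    (hab : (a : ZMod n) ≠ (b : ZMod n)) :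
    -- (a,b)_u (a,b)_v = (a)_{[v−u]} (b)_{[u−v]}
    (affT n a (b + u * n) ∘ affT n a (b + v * n) =
        shiftCycle n a (v - u) ∘ shiftCycle n b (u - v)) ∧
    -- (a,b)_u (b,a)_v = (a)_{[−u−v]} (b)_{[u+v]}
    (affT n a (b + u * n) ∘ affT n b (a + v * n) =
        shiftCycle n a (-(u + v)) ∘ shiftCycle n b (u + v)) ∧
    -- if t₁ ≠ t₂ (same residue pair, same orientation), t₁t₂ has infinite order
    (affT n a (b + u * n) ≠ affT n a (b + v * n) →
      ∀ m : ℕ, 0 < m → (affT n a (b + u * n) ∘ affT n a (b + v * n))^[m] ≠ id) ∧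
    -- if t₁ ≠ t₂ (same residue pair, opposite orientation), t₁t₂ has infinite order
    (affT n a (b + u * n) ≠ affT n b (a + v * n) →
      ∀ m : ℕ, 0 < m → (affT n a (b + u * n) ∘ affT n b (a + v * n))^[m] ≠ id) := by
  have hba : (b : ZMod n) ≠ a := fun h => hab h.symm
  have hnz : (n : ℤ) ≠ 0 := by exact_mod_cast hn.ne'
  have h1 : affT n a (b + u * n) ∘ affT n a (b + v * n) =
      shiftCycle n a (v - u) ∘ shiftCycle n b (u - v) := by
    funext x
    simp only [Function.comp_apply]
    by_cases hxa : (x : ZMod n) = (a : ZMod n)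
    · have hxb : (x : ZMod n) ≠ b := by rw [hxa]; exact hab
      have hr : ((x + (b + v * n - a) : ℤ) : ZMod n) = (b : ZMod n) := by
        push_cast; rw [hxa]; ring_nf; simp
      rw [affT_a n a b v x hxa, affT_b n a b u _ hab hr,
        sc_o n b _ _ hxb, sc_a n a _ _ hxa]
      ring
    · by_cases hxb : (x : ZMod n) = (b : ZMod n)
      · have hr : ((x + (a - (b + v * n)) : ℤ) : ZMod n) = (a : ZMod n) := by
          push_cast; rw [hxb]; ring_nf; simp
        rw [affT_b n a b v x hab hxb, affT_a n a b u _ hr,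
          sc_a n b _ _ hxb, sc_o n a _ _ (by rw [cast_add_mul]; exact hxa)]
        ring
      · rw [affT_o n a b v x hxa hxb, affT_o n a b u x hxa hxb,
          sc_o n b _ _ hxb, sc_o n a _ _ hxa]
  have h2 : affT n a (b + u * n) ∘ affT n b (a + v * n) =
      shiftCycle n a (-(u + v)) ∘ shiftCycle n b (u + v) := by
    funext x
    simp only [Function.comp_apply]
    by_cases hxa : (x : ZMod n) = (a : ZMod n)
    · have hxb : (x : ZMod n) ≠ b := by rw [hxa]; exact hab
      have hr : ((x + (b - (a + v * n)) : ℤ) : ZMod n) = (b : ZMod n) := by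
        push_cast; rw [hxa]; ring_nf; simp
      rw [affT_b n b a v x hba hxa, affT_b n a b u _ hab hr,
        sc_o n b _ _ hxb, sc_a n a _ _ hxa]
      ring
    · by_cases hxb : (x : ZMod n) = (b : ZMod n)
      · have hr : ((x + (a + v * n - b) : ℤ) : ZMod n) = (a : ZMod n) := by
          push_cast; rw [hxb]; ring_nf; simp
        rw [affT_a n b a v x hxb, affT_a n a b u _ hr,
          sc_a n b _ _ hxb, sc_o n a _ _ (by rw [cast_add_mul]; exact hxa)]
        ring
      · rw [affT_o n b a v x hxb hxa, affT_o n a b u x hxa hxb,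
          sc_o n b _ _ hxb, sc_o n a _ _ hxa]
  refine ⟨h1, h2, ?_, ?_⟩
  · intro hne m hm hid
    have huv : u ≠ v := by
      rintro rfl; exact hne rfl
    have := iter_lemma n a b (v - u) (u - v) hab m
    rw [h1] at hid
    rw [hid] at this
    simp only [id_eq] at this
    have : (m : ℤ) * (v - u) * n = 0 := by linarith
    rcases mul_eq_zero.1 this with h | h
    · rcases mul_eq_zero.1 h with h | h
      · exact absurd h (by exact_mod_cast hm.ne')
      · exact huv (by linarith)
    · exact hnz h
  · intro hne m hm hid
    have huv : u + v ≠ 0 := by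
      intro h0
      apply hne
      have hv : v = -u := by linarith
      subst hv
      funext x
      by_cases hxa : (x : ZMod n) = (a : ZMod n)
      · rw [affT_a n a b u x hxa, affT_b n b a (-u) x hba hxa]
        ring
      · by_cases hxb : (x : ZMod n) = (b : ZMod n)
        · rw [affT_b n a b u x hab hxb, affT_a n b a (-u) x hxb]
          ring
        · rw [affT_o n a b u x hxa hxb, affT_o n b a (-u) x hxb hxa]
    have := iter_lemma n a b (-(u + v)) (u + v) hab m
    rw [h2] at hid
    rw [hid] at this
    simp only [id_eq] at this
    have : (m : ℤ) * (-(u + v)) * n = 0 := by linarith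
    rcases mul_eq_zero.1 this with h | h
    · rcases mul_eq_zero.1 h with h | h
      · exact absurd h (by exact_mod_cast hm.ne')
      · exact huv (by linarith)
    · exact hnz h

end
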